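/- Let 0 < α, β ≤ 1 and define G(t,s) = u(t,s) for t ≤ s and G(t,s) = u(s,t) for s ≤ t, where u(t,s) = (t^α/(αβ(α+β)(2α+β)))[2α s^α(1 − s^β) − β(1 − s^α)(t^{α+β} + s^{α+β})]. Then G(t,s) > 0 for all t, s ∈ (0,1), and G is symmetric: G(t,s) = G(s,t). -/
import Mathlib


open Real

lemma lidstone_key (α β s : ℝ) (hα : 0 < α) (hβ : 0 < β) (hs : 0 < s) (hs1 : s < 1) :
    β * s ^ β * (1 - s ^ α) < α * (1 - s ^ β) := by
  have hlog : Real.log s < 0 := Real.log_neg hs hs1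
  set L : ℝ := -Real.log s with hLdef
  have hL : 0 < L := by simp [hLdef]; linarith
  have hsb : s ^ β = Real.exp (-(β * L)) := by
    rw [Real.rpow_def_of_pos hs]; congr 1; simp [hLdef]; ring
  have hsa : s ^ α = Real.exp (-(α * L)) := by
    rw [Real.rpow_def_of_pos hs]; congr 1; simp [hLdef]; ring
  have hE : 0 < Real.exp (-(β * L)) := Real.exp_pos _
  have h1 : 1 + β * L < Real.exp (β * L) := by
    have := Real.add_one_lt_exp (x := β * L) (by positivity)
    linarith
  have hinv : Real.exp (β * L) * Real.exp (-(β * L)) = 1 := by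
    rw [← Real.exp_add]; simp
  have h1' : (1 + β * L) * Real.exp (-(β * L)) < 1 := by
    calc (1 + β * L) * Real.exp (-(β * L)) < Real.exp (β * L) * Real.exp (-(β * L)) :=
          mul_lt_mul_of_pos_right h1 hE
      _ = 1 := hinv
  have h2 : 1 - Real.exp (-(α * L)) ≤ α * L := by
    have := Real.add_one_le_exp (-(α * L)); linarith
  rw [hsa, hsb]
  nlinarith [mul_le_mul_of_nonneg_left h2 (mul_pos hβ hE).le, mul_pos hα hL,
    mul_pos (mul_pos hβ hL) hE]

theorem lidstone_green_pos_symm (α β : ℝ) (hα : 0 < α) (hα1 : α ≤ 1)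
    (hβ : 0 < β) (hβ1 : β ≤ 1)
    (u G : ℝ → ℝ → ℝ)
    (hu : ∀ t s, u t s =
      (t ^ α / (α * β * (α + β) * (2 * α + β))) *
        (2 * α * s ^ α * (1 - s ^ β) -
          β * (1 - s ^ α) * (t ^ (α + β) + s ^ (α + β))))
    (hG : ∀ t s, G t s = if t ≤ s then u t s else u s t) :
    (∀ t ∈ Set.Ioo (0:ℝ) 1, ∀ s ∈ Set.Ioo (0:ℝ) 1, 0 < G t s) ∧
    (∀ t s : ℝ, G t s = G s t) := by
  have hupos : ∀ t s : ℝ, 0 < t → t ≤ s → s < 1 → 0 < u t s := by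
    intro t s ht hts hs1
    have hs : 0 < s := lt_of_lt_of_le ht hts
    have hkey := lidstone_key α β s hα hβ hs hs1
    have hsa : (0:ℝ) < s ^ α := Real.rpow_pos_of_pos hs α
    have hsb : (0:ℝ) < s ^ β := Real.rpow_pos_of_pos hs β
    have hsa1 : s ^ α ≤ 1 := Real.rpow_le_one hs.le hs1.le hα.le
    have htpow : t ^ (α + β) ≤ s ^ (α + β) :=
      Real.rpow_le_rpow ht.le hts (by positivity)
    have hsplit : s ^ (α + β) = s ^ α * s ^ β := Real.rpow_add hs α β
    rw [hu]
    have hfac : (0:ℝ) < t ^ α / (α * β * (α + β) * (2 * α + β)) := by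
      have := Real.rpow_pos_of_pos ht α
      positivity
    apply mul_pos hfac
    have h1 : β * (1 - s ^ α) * t ^ (α + β) ≤ β * (1 - s ^ α) * s ^ (α + β) :=
      mul_le_mul_of_nonneg_left htpow (by nlinarith)
    rw [hsplit] at h1 ⊢
    nlinarith [mul_lt_mul_of_pos_left hkey hsa]
  constructor
  · intro t ht s hs
    rw [hG]
    split_ifs with h
    · exact hupos t s ht.1 h hs.2
    · exact hupos s t hs.1 (le_of_not_ge h) ht.2
  · intro t s
    rw [hG, hG]
    rcases le_total t s with h | h
    · rcases eq_or_lt_of_le h with rfl | hlt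
      · simp
      · rw [if_pos h, if_neg (not_le.mpr hlt)]
    · rcases eq_or_lt_of_le h with rfl | hlt
      · simp
      · rw [if_neg (not_le.mpr hlt), if_pos h]
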